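/- If M is a positive semidefinite matrix and A is a self-adjoint subalgebra (a *-subalgebra closed under conjugate transpose) of the algebra of n×n complex matrices, then the orthogonal projection of M onto A (with respect to the trace inner product) is also positive semidefinite. -/

import Mathlib

open Matrix ComplexOrder Polynomial

private lemma aux_trace_self_mul_conjTranspose_eq_zero {m : Type*} [Fintype m]
    {A : Matrix m m ℂ} (h : (A * Aᴴ).trace = 0) : A = 0 := by
  have h' : ((∑ i, ∑ j, Complex.normSq (A i j) : ℝ) : ℂ) = 0 := by
    rw [← h]
    simp [Matrix.trace, Matrix.mul_apply, Matrix.diag, Matrix.conjTranspose_apply,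
      Complex.mul_conj]
  have h2 : (∑ i, ∑ j, Complex.normSq (A i j) : ℝ) = 0 := by exact_mod_cast h'
  ext i j
  have hij : Complex.normSq (A i j) = 0 := by
    have h3 := (Finset.sum_eq_zero_iff_of_nonneg (fun i _ => Finset.sum_nonneg
      (fun j _ => Complex.normSq_nonneg (A i j)))).mp h2 i (Finset.mem_univ i)
    exact (Finset.sum_eq_zero_iff_of_nonneg
      (fun j _ => Complex.normSq_nonneg (A i j))).mp h3 j (Finset.mem_univ j)
  simpa using Complex.normSq_eq_zero.mp hij

private lemma aux_trace_nonneg_of_posSemidef {m : Type*} [Fintype m] [DecidableEq m]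
    {A : Matrix m m ℂ} (hA : A.PosSemidef) : 0 ≤ A.trace := by
  rw [Matrix.trace]
  apply Finset.sum_nonneg
  intro i _
  exact hA.diag_nonneg

private lemma aux_conj_mul {m : Type*} [Fintype m] [DecidableEq m]
    (U A B : Matrix m m ℂ) (hU' : Uᴴ * U = 1) :
    (U * A * Uᴴ) * (U * B * Uᴴ) = U * (A * B) * Uᴴ := by
  rw [Matrix.mul_assoc (U * A) Uᴴ ((U * B) * Uᴴ), ← Matrix.mul_assoc Uᴴ (U * B) Uᴴ,
    ← Matrix.mul_assoc Uᴴ U B, hU', Matrix.one_mul, ← Matrix.mul_assoc (U * A) B Uᴴ,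
    Matrix.mul_assoc U A B]

private lemma aux_aeval_unitary_conj {m : Type*} [Fintype m] [DecidableEq m]
    (U A : Matrix m m ℂ) (hU : U * Uᴴ = 1) (hU' : Uᴴ * U = 1) (q : ℂ[X]) :
    aeval (U * A * Uᴴ) q = U * aeval A q * Uᴴ := by
  have hpow : ∀ k : ℕ, (U * A * Uᴴ) ^ k = U * A ^ k * Uᴴ := by
    intro k
    induction k with
    | zero => simp [hU]
    | succ k ih =>
      rw [pow_succ, pow_succ, ih]
      calc U * A ^ k * Uᴴ * (U * A * Uᴴ) = U * A ^ k * (Uᴴ * U) * A * Uᴴ := by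
            simp only [Matrix.mul_assoc]
        _ = U * (A ^ k * A) * Uᴴ := by rw [hU']; simp only [Matrix.mul_assoc, Matrix.mul_one,
            Matrix.one_mul]
  rw [aeval_eq_sum_range, aeval_eq_sum_range, Finset.mul_sum, Finset.sum_mul]
  refine Finset.sum_congr rfl fun k _ => ?_
  rw [hpow, Matrix.mul_smul, Matrix.smul_mul]

private lemma aux_aeval_diagonal {m : Type*} [Fintype m] [DecidableEq m]
    (d : m → ℂ) (q : ℂ[X]) :
    aeval (Matrix.diagonal d) q = Matrix.diagonal (fun i => q.eval (d i)) := by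
  rw [aeval_eq_sum_range]
  ext i j
  rcases eq_or_ne i j with rfl | hij
  · simp [Matrix.sum_apply, Matrix.diagonal_pow, Matrix.diagonal_apply_eq,
      eval_eq_sum_range, smul_eq_mul]
  · simp [Matrix.sum_apply, Matrix.diagonal_pow, Matrix.diagonal_apply_ne _ hij, hij]

private lemma aux_aeval_mem {m : Type*} [Fintype m] [DecidableEq m]
    (S : NonUnitalStarSubalgebra ℂ (Matrix m m ℂ)) {A : Matrix m m ℂ} (hA : A ∈ S)
    (q : ℂ[X]) (hq : q.coeff 0 = 0) : aeval A q ∈ S := by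
  have hpow : ∀ k : ℕ, A ^ (k + 1) ∈ S := by
    intro k
    induction k with
    | zero => simpa using hA
    | succ k ih => rw [pow_succ]; exact mul_mem ih hA
  rw [aeval_eq_sum_range]
  apply sum_mem
  intro k _
  rcases Nat.eq_zero_or_pos k with rfl | hk
  · rw [hq, zero_smul]; exact zero_mem S
  · obtain ⟨k, rfl⟩ := Nat.exists_eq_add_of_lt hk
    exact SMulMemClass.smul_mem _ (by simpa using hpow k)

/-- If `M` is a positive semidefinite complex matrix and `S` is a *-subalgebra of the
n×n complex matrices (a linear subspace closed under multiplication and conjugate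
transposition), then the orthogonal projection `M'` of `M` onto `S` with respect to the
trace inner product `⟨X, Y⟩ = tr (X Yᴴ)` (characterized by `M' ∈ S` and `M - M' ⊥ S`)
is also positive semidefinite. -/
theorem psd_projection_onto_star_subalgebra {n : ℕ}
    (S : NonUnitalStarSubalgebra ℂ (Matrix (Fin n) (Fin n) ℂ))
    (M M' : Matrix (Fin n) (Fin n) ℂ)
    (hM : M.PosSemidef)
    (hM'mem : M' ∈ S)
    (hproj : ∀ X ∈ S, ((M - M') * Xᴴ).trace = 0) :
    M'.PosSemidef := by
  have hMH : Mᴴ = M := hM.1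
  -- orthogonality gives `trace (M * Xᴴ) = trace (M' * Xᴴ)` for `X ∈ S`
  have key : ∀ X ∈ S, (M * Xᴴ).trace = (M' * Xᴴ).trace := by
    intro X hX
    have := hproj X hX
    rwa [Matrix.sub_mul, Matrix.trace_sub, sub_eq_zero] at this
  have hstarmem : M'ᴴ ∈ S := S.star_mem' hM'mem
  -- first, `M'` is Hermitian
  have hH : M'.IsHermitian := by
    set D := M' - M'ᴴ with hD
    have hDmem : D ∈ S := sub_mem hM'mem hstarmem
    have hDHmem : Dᴴ ∈ S := S.star_mem' hDmem
    have h1 : (M * Dᴴ).trace = (M' * Dᴴ).trace := key D hDmem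
    have h2 : (M * D).trace = (M' * D).trace := by
      have := key Dᴴ hDHmem
      rwa [Matrix.conjTranspose_conjTranspose] at this
    have h3 : (M'ᴴ * Dᴴ).trace = (M * Dᴴ).trace := by
      have : M'ᴴ * Dᴴ = (D * M')ᴴ := by rw [Matrix.conjTranspose_mul]
      rw [this, Matrix.trace_conjTranspose, Matrix.trace_mul_comm D M', ← h2,
        Matrix.trace_mul_comm M D, ← Matrix.trace_conjTranspose, Matrix.conjTranspose_mul, hMH]
    have htr : (D * Dᴴ).trace = 0 := by
      have : D * Dᴴ = M' * Dᴴ - M'ᴴ * Dᴴ := by rw [hD, Matrix.sub_mul]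
      rw [this, Matrix.trace_sub, ← h1, h3, sub_self]
    have hD0 : D = 0 := aux_trace_self_mul_conjTranspose_eq_zero htr
    have : M'ᴴ = M' := by
      have := sub_eq_zero.mp hD0
      exact this.symm
    exact this
  -- spectral data
  set U : Matrix (Fin n) (Fin n) ℂ := (hH.eigenvectorUnitary : Matrix (Fin n) (Fin n) ℂ) with hUdef
  have hUU : U * Uᴴ = 1 := by
    rw [← Matrix.star_eq_conjTranspose]
    exact (Matrix.mem_unitaryGroup_iff).mp hH.eigenvectorUnitary.2
  have hUU' : Uᴴ * U = 1 := by
    rw [← Matrix.star_eq_conjTranspose]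
    exact (Matrix.mem_unitaryGroup_iff').mp hH.eigenvectorUnitary.2
  have hspec : M' = U * diagonal (fun i => (hH.eigenvalues i : ℂ)) * Uᴴ := by
    exact hH.spectral_theorem
  set g : Fin n → ℝ := fun i => max (-(hH.eigenvalues i)) 0 with hg
  -- interpolation polynomial
  set s : Finset ℂ := insert 0 (Finset.image (fun i => (hH.eigenvalues i : ℂ)) Finset.univ)
    with hs
  set r : ℂ → ℂ := fun z => ((max (-z.re) 0 : ℝ) : ℂ) with hr
  set q : ℂ[X] := Lagrange.interpolate s id r with hq
  have hqeval : ∀ x ∈ s, q.eval x = r x := by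
    intro x hx
    exact Lagrange.eval_interpolate_at_node r (Set.injOn_id _) hx
  have hq0 : q.coeff 0 = 0 := by
    rw [Polynomial.coeff_zero_eq_eval_zero, hqeval 0 (Finset.mem_insert_self _ _)]
    simp [hr]
  have hqval : ∀ i, q.eval ((hH.eigenvalues i : ℂ)) = (g i : ℂ) := by
    intro i
    rw [hqeval _ (Finset.mem_insert_of_mem (Finset.mem_image_of_mem _ (Finset.mem_univ i)))]
    simp [hr, hg]
  -- the negative part
  set N : Matrix (Fin n) (Fin n) ℂ := aeval M' q with hN
  have hNmem : N ∈ S := aux_aeval_mem S hM'mem q hq0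
  have hNeq : N = U * diagonal (fun i => (g i : ℂ)) * Uᴴ := by
    rw [hN, hspec, aux_aeval_unitary_conj U _ hUU hUU', aux_aeval_diagonal]
    have : (fun i => q.eval ((hH.eigenvalues i : ℂ))) = fun i => (g i : ℂ) := funext hqval
    rw [this]
  have hNpsd : N.PosSemidef := by
    rw [hNeq]
    exact (Matrix.PosSemidef.diagonal (fun i =>
      Complex.zero_le_real.mpr (le_max_right _ _))).mul_mul_conjTranspose_same U
  have hNH : Nᴴ = N := hNpsd.1
  -- trace (M' * N) = -∑ g i ^ 2
  have htrM'N : (M' * N).trace = ((-(∑ i, g i ^ 2) : ℝ) : ℂ) := by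
    rw [hspec, hNeq]
    rw [aux_conj_mul U _ _ hUU', Matrix.trace_mul_cycle, hUU', Matrix.one_mul,
      Matrix.diagonal_mul_diagonal, Matrix.trace_diagonal]
    push_cast
    rw [← Finset.sum_neg_distrib]
    refine Finset.sum_congr rfl fun i _ => ?_
    rcases le_or_gt 0 (hH.eigenvalues i) with h | h
    · have : g i = 0 := max_eq_right (neg_nonpos.mpr h)
      simp [this]
    · have : g i = -(hH.eigenvalues i) := max_eq_left (le_of_lt (by linarith))
      rw [this]; push_cast; ring
  -- trace (M * N) ≥ 0
  have htrMN : (M * N).trace = (M' * N).trace := by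
    have := key N hNmem
    rwa [hNH] at this
  have htrMN_nonneg : 0 ≤ (M * N).trace := by
    open scoped MatrixOrder in
    set Q := CFC.sqrt N with hQ
    open scoped MatrixOrder in
    have hQH : Qᴴ = Q := (CFC.sqrt_nonneg N).posSemidef.1
    open scoped MatrixOrder in
    have : M * N = M * Q * Q := by rw [Matrix.mul_assoc, CFC.sqrt_mul_sqrt_self N hNpsd.nonneg]
    rw [this, Matrix.trace_mul_cycle]
    have : Q * M * Q = Qᴴ * M * Q := by rw [hQH]
    rw [this]
    exact aux_trace_nonneg_of_posSemidef (hM.conjTranspose_mul_mul_same Q)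
  -- conclude ∑ g i ^ 2 ≤ 0, hence all eigenvalues are nonneg
  have hsum : ∑ i, g i ^ 2 ≤ 0 := by
    rw [htrMN, htrM'N] at htrMN_nonneg
    have := (Complex.zero_le_real).mp htrMN_nonneg
    linarith
  have hg0 : ∀ i, g i = 0 := by
    intro i
    have h1 : ∀ j ∈ Finset.univ, 0 ≤ g j ^ 2 := fun j _ => sq_nonneg _
    have h2 : ∑ j, g j ^ 2 = 0 := le_antisymm hsum (Finset.sum_nonneg h1)
    have := (Finset.sum_eq_zero_iff_of_nonneg h1).mp h2 i (Finset.mem_univ i)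
    exact pow_eq_zero_iff (by norm_num) |>.mp this
  apply (Matrix.IsHermitian.posSemidef_iff_eigenvalues_nonneg hH).mpr
  intro i
  have h2 : max (-(hH.eigenvalues i)) 0 = 0 := hg0 i
  have h3 := le_max_left (-(hH.eigenvalues i)) 0
  rw [h2] at h3
  exact (by linarith : (0 : ℝ) ≤ hH.eigenvalues i)
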